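/- Define S_m = D_{m+1} − D_m. Then for every m ≥ p and every k with 0 < k < p−1: S_{pm+k} = S_{p(p−1−S_m)+k}. -/

import Mathlib

open MeasureTheory
open scoped NNReal ENNReal

namespace Chacon

/-- The space of digit sequences with digits in `{0, …, p-1}`. -/
def Gamma (p : ℕ) : Set (ℕ → ℕ) := {x | ∀ i, x i < p}

/-- `Γ*`: sequences with digits `< p` having infinitely many coordinates `≠ p - 1`. -/
def GammaStar (p : ℕ) : Set (ℕ → ℕ) :=
  {x | (∀ i, x i < p) ∧ {i | x i ≠ p - 1}.Infinite}

/-- The least index `i` with `x i ≠ p - 1`. -/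
noncomputable def firstNot (p : ℕ) (x : ℕ → ℕ) : ℕ :=
  sInf {i | x i ≠ p - 1}

/-- `φ(x) = x_i` where `i` is the least index with `x_i ≠ p - 1`. -/
noncomputable def phi (p : ℕ) (x : ℕ → ℕ) : ℕ :=
  x (firstNot p x)

/-- The odometer `S` (addition of `1` with carry): the initial run of digits
`p - 1` is replaced by zeros, and the first digit `≠ p - 1` is increased by one. -/
noncomputable def odo (p : ℕ) (x : ℕ → ℕ) : ℕ → ℕ :=
  fun i =>
    if i < firstNot p x then 0
    else if i = firstNot p x then x i + 1
    else x i

/-- `φ^(m)(x) = ∑_{j=0}^{m-1} φ(S^j x)`. -/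
noncomputable def phiSum (p m : ℕ) (x : ℕ → ℕ) : ℕ :=
  ∑ j ∈ Finset.range m, phi p ((odo p)^[j] x)

/-- The base-`p` digit sequence of a real number `u`. -/
noncomputable def digitsOf (p : ℕ) (u : ℝ) : ℕ → ℕ :=
  fun i => (⌊u * (p : ℝ) ^ (i + 1)⌋).toNat % p

/-- `λ`: the product probability measure on digit sequences under which the
coordinates are i.i.d., uniformly distributed in `{0, …, p-1}`; it is realized
concretely as the distribution of the base-`p` digit sequence of a uniformly
distributed random point of `[0,1)`. -/
noncomputable def lam (p : ℕ) : Measure (ℕ → ℕ) :=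
  Measure.map (digitsOf p) (volume.restrict (Set.Ico (0 : ℝ) 1))

/-- `π_m(j) = λ({x : φ^(m)(x) = j})`. -/
noncomputable def pim (p m j : ℕ) : ℝ≥0∞ :=
  lam p {x | phiSum p m x = j}

/-- `P_m^p(t) = ∑_{j ≥ 0} π_m(j) t^j`, a real polynomial
(the sum is over `0 ≤ j ≤ m (p-2)` since `0 ≤ φ^(m) ≤ m (p-2)` a.s.). -/
noncomputable def P (p m : ℕ) (t : ℝ) : ℝ :=
  ∑ j ∈ Finset.range (m * (p - 2) + 1), (pim p m j).toReal * t ^ j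

/-- The `n`-th triangular number `Δ_n = n (n+1) / 2`. -/
def tri (n : ℕ) : ℕ := n * (n + 1) / 2

/-- The degree `D_m` of `P_m^p`: the largest `j` with `π_m(j) ≠ 0`. -/
noncomputable def D (p m : ℕ) : ℕ := sSup {j | pim p m j ≠ 0}

/-- The lower degree `d_m` of `P_m^p`: the least `j` with `π_m(j) ≠ 0`. -/
noncomputable def d (p m : ℕ) : ℕ := sInf {j | pim p m j ≠ 0}


/-- `S_m = D_{m+1} - D_m`. -/
noncomputable def Sseq (p m : ℕ) : ℕ := D p (m + 1) - D p m


/-- first non-`p-1` digit of `n` in base `p` (for `p ≥ 2`). -/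
def fdig (p : ℕ) : ℕ → ℕ
  | n =>
    if h : 2 ≤ p ∧ n % p = p - 1 then
      have h1 : 1 ≤ n := by
        have := Nat.mod_le n p; omega
      have : n / p < n := Nat.div_lt_self h1 (by omega)
      fdig p (n / p)
    else n % p

lemma fdig_of_ne {p n : ℕ} (h : ¬ (n % p = p - 1)) : fdig p n = n % p := by
  rw [fdig]; simp [h]

lemma fdig_of_eq {p n : ℕ} (hp : 2 ≤ p) (h : n % p = p - 1) :
    fdig p n = fdig p (n / p) := by
  rw [fdig]; simp [h, hp]

lemma fdig_le {p : ℕ} (hp : 2 ≤ p) : ∀ n, fdig p n ≤ p - 2 := by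
  intro n
  induction n using Nat.strong_induction_on with
  | _ n ih =>
    by_cases h : n % p = p - 1
    · rw [fdig_of_eq hp h]
      have h1 : 1 ≤ n := by have := Nat.mod_le n p; omega
      exact ih (n / p) (Nat.div_lt_self h1 (by omega))
    · rw [fdig_of_ne h]
      have := Nat.mod_lt n (show 0 < p by omega)
      omega

lemma fdig_small {p n : ℕ} (hp : 2 ≤ p) (h : n < p - 1) : fdig p n = n := by
  have hn : n % p = n := Nat.mod_eq_of_lt (by omega)
  rw [fdig_of_ne (by omega)]; exact hn

def Fsum (p a m : ℕ) : ℕ := ∑ t ∈ Finset.range m, fdig p (a + t)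

lemma Fsum_succ (p a m : ℕ) : Fsum p a (m + 1) = Fsum p a m + fdig p (a + m) :=
  Finset.sum_range_succ _ _

lemma Fsum_le {p : ℕ} (hp : 2 ≤ p) (a m : ℕ) : Fsum p a m ≤ m * (p - 2) := by
  calc Fsum p a m ≤ ∑ _t ∈ Finset.range m, (p - 2) :=
        Finset.sum_le_sum fun t _ => fdig_le hp _
    _ = m * (p - 2) := by simp [Finset.sum_const, mul_comm]

def gres (p c : ℕ) : ℕ := if c = p - 1 then 0 else c

lemma gres_le (p c : ℕ) : gres p c ≤ c := by unfold gres; split <;> omega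

def Wsum (p a n : ℕ) : ℕ := ∑ t ∈ Finset.range n, gres p ((a + t) % p)

lemma Wsum_succ (p a n : ℕ) : Wsum p a (n + 1) = Wsum p a n + gres p ((a + n) % p) :=
  Finset.sum_range_succ _ _

def Tsum (p : ℕ) : ℕ := ∑ c ∈ Finset.range p, gres p c

noncomputable def DD (p n : ℕ) : ℕ := sSup (Set.range fun a => Fsum p a n)

noncomputable def SS (p m : ℕ) : ℕ := DD p (m + 1) - DD p m

noncomputable def c2 (p k s : ℕ) : ℕ :=
  Finset.sup (Finset.range p) fun r => Wsum p r k + if p ≤ r + k then s else 0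

lemma bddAbove_Fsum {p : ℕ} (hp : 2 ≤ p) (m : ℕ) :
    BddAbove (Set.range fun a => Fsum p a m) := by
  refine ⟨m * (p - 2), ?_⟩
  rintro x ⟨a, rfl⟩
  exact Fsum_le hp a m

lemma Fsum_le_DD {p : ℕ} (hp : 2 ≤ p) (a m : ℕ) : Fsum p a m ≤ DD p m :=
  le_csSup (bddAbove_Fsum hp m) ⟨a, rfl⟩

lemma DD_le {p m c : ℕ} (h : ∀ a, Fsum p a m ≤ c) : DD p m ≤ c :=
  csSup_le ⟨Fsum p 0 m, ⟨0, rfl⟩⟩ (by rintro x ⟨a, rfl⟩; exact h a)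

lemma exists_Fsum_eq_DD {p : ℕ} (hp : 2 ≤ p) (m : ℕ) : ∃ a, Fsum p a m = DD p m := by
  have := Nat.sSup_mem (s := Set.range fun a => Fsum p a m) ⟨Fsum p 0 m, ⟨0, rfl⟩⟩
    (bddAbove_Fsum hp m)
  exact this

lemma DD_mono {p : ℕ} (hp : 2 ≤ p) (m : ℕ) : DD p m ≤ DD p (m + 1) := by
  apply DD_le
  intro a
  calc Fsum p a m ≤ Fsum p a (m + 1) := by rw [Fsum_succ]; omega
    _ ≤ DD p (m + 1) := Fsum_le_DD hp _ _

lemma DD_succ {p : ℕ} (hp : 2 ≤ p) (m : ℕ) : DD p (m + 1) = DD p m + SS p m := by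
  have := DD_mono hp m; unfold SS; omega

lemma SS_le {p : ℕ} (hp : 2 ≤ p) (m : ℕ) : SS p m ≤ p - 2 := by
  have h1 : DD p (m + 1) ≤ DD p m + (p - 2) := by
    apply DD_le
    intro a
    rw [Fsum_succ]
    have := Fsum_le_DD hp a m
    have := fdig_le hp (a + m)
    omega
  unfold SS; omega


/-- Key structural identity: summing `fdig` over an interval splits into
low-digit contributions plus an `Fsum` one level up. -/
lemma Fsum_split {p : ℕ} (hp : 2 ≤ p) :
    ∀ n a, Fsum p a n = Wsum p a n + Fsum p (a / p) ((a + n) / p - a / p) := by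
  intro n
  induction n with
  | zero => intro a; simp [Fsum, Wsum]
  | succ n ih =>
    intro a
    have hle : a / p ≤ (a + n) / p := Nat.div_le_div_right (by omega)
    have hq : a / p + ((a + n) / p - a / p) = (a + n) / p := by omega
    have hmod : (a + n) % p < p := Nat.mod_lt _ (by omega)
    rw [Fsum_succ, ih a, Wsum_succ]
    by_cases h : (a + n) % p = p - 1
    · -- carry case
      have hdvd : p ∣ (a + n + 1) := by
        have e := Nat.div_add_mod (a + n) p
        exact ⟨(a + n) / p + 1, by rw [Nat.mul_add, Nat.mul_one]; omega⟩
      have hdiv : (a + n + 1) / p = (a + n) / p + 1 := by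
        rw [Nat.succ_div, if_pos hdvd]
      have hg : gres p ((a + n) % p) = 0 := by simp [gres, h]
      have hf : fdig p (a + n) = fdig p ((a + n) / p) := fdig_of_eq hp h
      have hq' : (a + (n + 1)) / p - a / p = ((a + n) / p - a / p) + 1 := by
        have he : a + (n + 1) = a + n + 1 := by ring
        rw [he, hdiv]; omega
      rw [hq', Fsum_succ, hq, hg, hf]
      ring
    · -- no carry
      have hmod1 : (a + n + 1) % p = (a + n) % p + 1 := by
        conv_lhs => rw [← Nat.div_add_mod (a + n) p]
        rw [Nat.add_assoc, Nat.mul_add_mod]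
        exact Nat.mod_eq_of_lt (by omega)
      have hndvd : ¬ p ∣ (a + n + 1) := by
        intro hd
        have h2 : (a + n + 1) % p = 0 := Nat.dvd_iff_mod_eq_zero.mp hd
        omega
      have hdiv : (a + n + 1) / p = (a + n) / p := by
        rw [Nat.succ_div, if_neg hndvd]
        omega
      have hg : gres p ((a + n) % p) = (a + n) % p := by simp [gres, h]
      have hf : fdig p (a + n) = (a + n) % p := fdig_of_ne h
      have hq' : (a + (n + 1)) / p - a / p = (a + n) / p - a / p := by
        have he : a + (n + 1) = a + n + 1 := by ring
        rw [he, hdiv]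
      rw [hq', hg, hf]
      ring

lemma Wsum_block {p : ℕ} (hp : 1 ≤ p) : ∀ b, Wsum p b p = Tsum p := by
  intro b
  induction b with
  | zero =>
    unfold Wsum Tsum
    apply Finset.sum_congr rfl
    intro t ht
    rw [Nat.zero_add, Nat.mod_eq_of_lt (Finset.mem_range.mp ht)]
  | succ b ih =>
    have e1 : ∑ t ∈ Finset.range (p + 1), gres p ((b + t) % p)
        = Wsum p b p + gres p ((b + p) % p) := Finset.sum_range_succ _ _
    have e2 : ∑ t ∈ Finset.range (p + 1), gres p ((b + t) % p)
        = (∑ t ∈ Finset.range p, gres p ((b + (t + 1)) % p)) + gres p ((b + 0) % p) :=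
      Finset.sum_range_succ' _ _
    have e3 : ∑ t ∈ Finset.range p, gres p ((b + (t + 1)) % p) = Wsum p (b + 1) p := by
      unfold Wsum
      apply Finset.sum_congr rfl
      intro t _
      congr 2
      ring
    have e4 : (b + p) % p = (b + 0) % p := by
      rw [Nat.add_mod_right, Nat.add_zero]
    rw [e3] at e2
    rw [e4] at e1
    omega
  
lemma Wsum_add_p {p : ℕ} (hp : 1 ≤ p) (a n : ℕ) :
    Wsum p a (n + p) = Wsum p a n + Tsum p := by
  have e1 : Wsum p a (n + p)
      = Wsum p a n + ∑ t ∈ Finset.Ico n (n + p), gres p ((a + t) % p) := by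
    unfold Wsum
    simp only [Finset.range_eq_Ico]
    exact (Finset.sum_Ico_consecutive _ (Nat.zero_le n) (Nat.le_add_right n p)).symm
  have e2 : ∑ t ∈ Finset.Ico n (n + p), gres p ((a + t) % p)
      = ∑ t ∈ Finset.range p, gres p ((a + n + t) % p) := by
    rw [Finset.sum_Ico_eq_sum_range]
    simp only [Nat.add_sub_cancel_left]
    apply Finset.sum_congr rfl
    intro t _
    congr 2
    ring
  rw [e1, e2]
  have := Wsum_block hp (a + n)
  unfold Wsum at this
  omega

lemma Wsum_mul {p : ℕ} (hp : 1 ≤ p) (a m k : ℕ) :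
    Wsum p a (p * m + k) = m * Tsum p + Wsum p a k := by
  induction m with
  | zero => simp
  | succ m ih =>
    have e : p * (m + 1) + k = (p * m + k) + p := by ring
    calc Wsum p a (p * (m + 1) + k) = Wsum p a ((p * m + k) + p) := by rw [e]
      _ = Wsum p a (p * m + k) + Tsum p := Wsum_add_p hp _ _
      _ = (m * Tsum p + Wsum p a k) + Tsum p := by rw [ih]
      _ = (m + 1) * Tsum p + Wsum p a k := by ring

lemma Wsum_mod (p a n : ℕ) : Wsum p a n = Wsum p (a % p) n := by
  unfold Wsum
  apply Finset.sum_congr rfl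
  intro t _
  rw [Nat.mod_add_mod]

lemma div_decomp {p : ℕ} (hp : 1 ≤ p) (a m k : ℕ) :
    (a + (p * m + k)) / p = a / p + m + (a % p + k) / p := by
  conv_lhs => rw [← Nat.div_add_mod a p]
  have e : p * (a / p) + a % p + (p * m + k) = p * (a / p + m) + (a % p + k) := by ring
  rw [e, Nat.mul_add_div (by omega)]

lemma sup_add {ι : Type*} (s : Finset ι) (hs : s.Nonempty) (f : ι → ℕ) (c : ℕ) :
    s.sup (fun i => f i + c) = s.sup f + c := by
  apply le_antisymm
  · exact Finset.sup_le fun i hi => Nat.add_le_add_right (Finset.le_sup (f := f) hi) c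
  · obtain ⟨i, hi, he⟩ := Finset.exists_mem_eq_sup s hs f
    rw [he]
    exact Finset.le_sup (f := fun i => f i + c) hi

lemma Dkey {p : ℕ} (hp : 2 ≤ p) (m k : ℕ) (hk : k < p) :
    DD p (p * m + k)
      = m * Tsum p + (Finset.range p).sup (fun r => Wsum p r k + DD p (m + (r + k) / p)) := by
  apply le_antisymm
  · apply DD_le
    intro a
    have e2 : a / p + m + (a % p + k) / p - a / p = m + (a % p + k) / p := by
      generalize (a % p + k) / p = w
      generalize a / p = q
      omega
    have h3 : Fsum p (a / p) (m + (a % p + k) / p) ≤ DD p (m + (a % p + k) / p) :=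
      Fsum_le_DD hp _ _
    have hmem : a % p ∈ Finset.range p :=
      Finset.mem_range.mpr (Nat.mod_lt a (show 0 < p by omega))
    have h4 : Wsum p (a % p) k + DD p (m + (a % p + k) / p)
        ≤ (Finset.range p).sup (fun r => Wsum p r k + DD p (m + (r + k) / p)) :=
      Finset.le_sup (f := fun r => Wsum p r k + DD p (m + (r + k) / p)) hmem
    calc Fsum p a (p * m + k)
        = Wsum p a (p * m + k) + Fsum p (a / p) ((a + (p * m + k)) / p - a / p) :=
          Fsum_split hp _ _
      _ = (m * Tsum p + Wsum p (a % p) k) + Fsum p (a / p) (m + (a % p + k) / p) := by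
          rw [Wsum_mul (show 1 ≤ p by omega), Wsum_mod, div_decomp (show 1 ≤ p by omega), e2]
      _ ≤ (m * Tsum p + Wsum p (a % p) k) + DD p (m + (a % p + k) / p) :=
          Nat.add_le_add_left h3 _
      _ = m * Tsum p + (Wsum p (a % p) k + DD p (m + (a % p + k) / p)) :=
          Nat.add_assoc _ _ _
      _ ≤ m * Tsum p + (Finset.range p).sup (fun r => Wsum p r k + DD p (m + (r + k) / p)) :=
          Nat.add_le_add_left h4 _
  · obtain ⟨r, hr, he⟩ := Finset.exists_mem_eq_sup (Finset.range p)
      ⟨0, Finset.mem_range.mpr (by omega)⟩ (fun r => Wsum p r k + DD p (m + (r + k) / p))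
    obtain ⟨b, hb⟩ := exists_Fsum_eq_DD hp (m + (r + k) / p)
    rw [he]
    have hrp : r < p := Finset.mem_range.mp hr
    have hd : (p * b + r) / p = b := by
      rw [Nat.mul_add_div (show 0 < p by omega), Nat.div_eq_of_lt hrp]
      omega
    have hm2 : (p * b + r) % p = r := by
      rw [Nat.mul_add_mod, Nat.mod_eq_of_lt hrp]
    have e2 : b + m + (r + k) / p - b = m + (r + k) / p := by
      generalize (r + k) / p = w
      omega
    have key : Fsum p (p * b + r) (p * m + k)
        = m * Tsum p + (Wsum p r k + DD p (m + (r + k) / p)) := by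
      have e1 : Fsum p (p * b + r) (p * m + k)
          = Wsum p (p * b + r) (p * m + k)
            + Fsum p ((p * b + r) / p) (((p * b + r) + (p * m + k)) / p - (p * b + r) / p) :=
        Fsum_split hp _ _
      rw [e1, Wsum_mul (show 1 ≤ p by omega), Wsum_mod, div_decomp (show 1 ≤ p by omega),
        hd, hm2, e2, hb]
      ring
    calc m * Tsum p + (Wsum p r k + DD p (m + (r + k) / p))
        = Fsum p (p * b + r) (p * m + k) := key.symm
      _ ≤ DD p (p * m + k) := Fsum_le_DD hp _ _

lemma div_one_of_le {p r k : ℕ} (hr : r < p) (hk : k < p) (h : p ≤ r + k) :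
    (r + k) / p = 1 :=
  Nat.div_eq_of_lt_le (by omega) (by omega)

lemma Dstep {p : ℕ} (hp : 2 ≤ p) {m k : ℕ} (hk : k < p) :
    DD p (p * m + k) = m * Tsum p + DD p m + c2 p k (SS p m) := by
  have hne : (Finset.range p).Nonempty := ⟨0, Finset.mem_range.mpr (by omega)⟩
  have hcongr : ∀ r ∈ Finset.range p,
      Wsum p r k + DD p (m + (r + k) / p)
        = (Wsum p r k + (if p ≤ r + k then SS p m else 0)) + DD p m := by
    intro r hr
    have hrp : r < p := Finset.mem_range.mp hr
    by_cases h : p ≤ r + k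
    · rw [div_one_of_le hrp hk h, if_pos h, DD_succ hp m]
      ring
    · rw [Nat.div_eq_of_lt (by omega), if_neg h]
      ring
  have hsup : (Finset.range p).sup (fun r => Wsum p r k + DD p (m + (r + k) / p))
      = c2 p k (SS p m) + DD p m := by
    rw [Finset.sup_congr rfl hcongr]
    exact sup_add _ hne _ _
  rw [Dkey hp m k hk, hsup]
  ring

lemma SSstep {p : ℕ} (hp : 2 ≤ p) {m k : ℕ} (hk : k + 1 < p) :
    SS p (p * m + k) = c2 p (k + 1) (SS p m) - c2 p k (SS p m) := by
  have e := DD_succ hp (p * m + k)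
  have e1 : p * m + k + 1 = p * m + (k + 1) := rfl
  rw [e1, Dstep hp hk, Dstep hp (show k < p by omega)] at e
  omega

lemma DD_zero (p : ℕ) : DD p 0 = 0 := by
  have h : (Set.range fun a => Fsum p a 0) = {0} := by
    ext x
    simp [Fsum]
  unfold DD
  rw [h]
  exact csSup_singleton 0

lemma DD_one {p : ℕ} (hp : 2 ≤ p) : DD p 1 = p - 2 := by
  apply le_antisymm
  · apply DD_le
    intro a
    have h : Fsum p a 1 = fdig p (a + 0) := by simp [Fsum]
    rw [h]
    exact fdig_le hp _
  · have h : Fsum p (p - 2) 1 = p - 2 := by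
      have h1 : Fsum p (p - 2) 1 = fdig p (p - 2 + 0) := by
        unfold Fsum
        exact Finset.sum_range_one _
      rw [h1, Nat.add_zero]
      exact fdig_small hp (by omega)
    calc (p : ℕ) - 2 = Fsum p (p - 2) 1 := h.symm
      _ ≤ DD p 1 := Fsum_le_DD hp _ _

lemma SS_zero {p : ℕ} (hp : 2 ≤ p) : SS p 0 = p - 2 := by
  unfold SS
  rw [DD_one hp, DD_zero]
  omega

lemma c2_zero {p : ℕ} (hp : 2 ≤ p) (s : ℕ) : c2 p 0 s = 0 := by
  unfold c2
  apply le_antisymm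
  · apply Finset.sup_le
    intro r hr
    have hrp : r < p := Finset.mem_range.mp hr
    rw [if_neg (by omega)]
    simp [Wsum]
  · exact Nat.zero_le _

lemma sum_split_top (f : ℕ → ℕ) {n : ℕ} (hn : 1 ≤ n) :
    ∑ c ∈ Finset.range n, f c = (∑ c ∈ Finset.range (n - 1), f c) + f (n - 1) := by
  obtain ⟨q, rfl⟩ : ∃ q, n = q + 1 := ⟨n - 1, by omega⟩
  simp [Finset.sum_range_succ]

lemma Wsum_top {p : ℕ} (hp : 2 ≤ p) {j : ℕ} (hj1 : 1 ≤ j) (hj : j ≤ p - 1) :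
    Wsum p (p - j) j = ∑ c ∈ Finset.Ico (p - j) (p - 1), c := by
  unfold Wsum
  rw [Finset.sum_Ico_eq_sum_range]
  have e1 : p - 1 - (p - j) = j - 1 := by omega
  rw [e1]
  rw [sum_split_top _ hj1]
  have e2 : (p - j + (j - 1)) % p = p - 1 := by
    rw [Nat.mod_eq_of_lt (by omega)]
    omega
  rw [e2]
  have e3 : gres p (p - 1) = 0 := by simp [gres]
  rw [e3, Nat.add_zero]
  apply Finset.sum_congr rfl
  intro t ht
  have ht' : t < j - 1 := Finset.mem_range.mp ht
  rw [Nat.mod_eq_of_lt (by omega)]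
  unfold gres
  rw [if_neg (by omega)]

lemma Wsum_le_A {p : ℕ} (hp : 2 ≤ p) {r j : ℕ} (hj1 : 1 ≤ j) (hrj : r + j ≤ p - 1) :
    Wsum p r j ≤ (p - 2) + ∑ c ∈ Finset.Ico (p - j) (p - 1), c := by
  have h1 : Wsum p r j ≤ ∑ t ∈ Finset.range j, (p - 1 - j + t) := by
    unfold Wsum
    apply Finset.sum_le_sum
    intro t ht
    have ht' : t < j := Finset.mem_range.mp ht
    have hg := gres_le p ((r + t) % p)
    have hm := Nat.mod_le (r + t) p
    omega
  have h2 : ∑ t ∈ Finset.range j, (p - 1 - j + t) = ∑ c ∈ Finset.Ico (p - 1 - j) (p - 1), c := by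
    rw [Finset.sum_Ico_eq_sum_range]
    have e : p - 1 - (p - 1 - j) = j := by omega
    rw [e]
  have h3 : ∑ c ∈ Finset.Ico (p - 1 - j) (p - 1), c
      = (p - 1 - j) + ∑ c ∈ Finset.Ico (p - j) (p - 1), c := by
    rw [Finset.sum_eq_sum_Ico_succ_bot (show p - 1 - j < p - 1 by omega)]
    have e : p - 1 - j + 1 = p - j := by omega
    rw [e]
  omega

lemma Wsum_le_B {p : ℕ} (hp : 2 ≤ p) {r j : ℕ} (hr : r < p) (hj : j ≤ p - 1)
    (h : p ≤ r + j) : Wsum p r j ≤ ∑ c ∈ Finset.Ico (p - j) (p - 1), c := by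
  have hprj : p - r ≤ j := by omega
  have hsplit : Wsum p r j = (∑ t ∈ Finset.Ico 0 (p - r), gres p ((r + t) % p))
      + ∑ t ∈ Finset.Ico (p - r) j, gres p ((r + t) % p) := by
    unfold Wsum
    simp only [Finset.range_eq_Ico]
    exact (Finset.sum_Ico_consecutive _ (Nat.zero_le _) hprj).symm
  have hA : ∑ t ∈ Finset.Ico 0 (p - r), gres p ((r + t) % p)
      ≤ ∑ c ∈ Finset.Ico r (p - 1), c := by
    rw [← Finset.range_eq_Ico]
    rw [sum_split_top _ (show 1 ≤ p - r by omega)]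
    have e2 : (r + (p - r - 1)) % p = p - 1 := by
      rw [Nat.mod_eq_of_lt (by omega)]
      omega
    rw [e2]
    have e3 : gres p (p - 1) = 0 := by simp [gres]
    rw [e3, Nat.add_zero]
    have e4 : ∑ c ∈ Finset.Ico r (p - 1), c = ∑ t ∈ Finset.range (p - r - 1), (r + t) := by
      rw [Finset.sum_Ico_eq_sum_range]
      have e : p - 1 - r = p - r - 1 := by omega
      rw [e]
    rw [e4]
    apply Finset.sum_le_sum
    intro t ht
    have hg := gres_le p ((r + t) % p)
    have hm := Nat.mod_le (r + t) p
    omega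
  have hB : ∑ t ∈ Finset.Ico (p - r) j, gres p ((r + t) % p)
      ≤ ∑ c ∈ Finset.Ico (p - j) r, c := by
    rw [Finset.sum_Ico_eq_sum_range, Finset.sum_Ico_eq_sum_range]
    have e5 : r - (p - j) = j - (p - r) := by omega
    rw [e5]

    apply Finset.sum_le_sum
    intro s hs
    have hs' : s < j - (p - r) := Finset.mem_range.mp hs
    have e6 : (r + (p - r + s)) % p = s := by
      have e7 : r + (p - r + s) = p + s := by omega
      rw [e7, Nat.add_mod_left, Nat.mod_eq_of_lt (by omega)]
    rw [e6]
    have := gres_le p s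
    omega
  have hcons : ∑ c ∈ Finset.Ico (p - j) r, c + ∑ c ∈ Finset.Ico r (p - 1), c
      = ∑ c ∈ Finset.Ico (p - j) (p - 1), c :=
    Finset.sum_Ico_consecutive _ (by omega) (by omega)
  omega

lemma c2_eval {p : ℕ} (hp : 2 ≤ p) {j : ℕ} (hj1 : 1 ≤ j) (hj : j ≤ p - 1) :
    c2 p j (p - 2) = (p - 2) + ∑ c ∈ Finset.Ico (p - j) (p - 1), c := by
  unfold c2
  apply le_antisymm
  · apply Finset.sup_le
    intro r hr
    have hrp : r < p := Finset.mem_range.mp hr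
    by_cases h : p ≤ r + j
    · rw [if_pos h]
      have := Wsum_le_B hp hrp hj h
      omega
    · rw [if_neg h]
      have := Wsum_le_A hp hj1 (show r + j ≤ p - 1 by omega)
      omega
  · have hmem : p - j ∈ Finset.range p := Finset.mem_range.mpr (by omega)
    have hval : Wsum p (p - j) j + (if p ≤ p - j + j then p - 2 else 0)
        = (p - 2) + ∑ c ∈ Finset.Ico (p - j) (p - 1), c := by
      rw [Wsum_top hp hj1 hj, if_pos (show p ≤ p - j + j by omega)]
      omega
    refine le_trans (le_of_eq hval.symm) ?_
    exact Finset.le_sup (f := fun r => Wsum p r j + if p ≤ r + j then p - 2 else 0) hmem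

lemma DD_small {p : ℕ} (hp : 2 ≤ p) {j : ℕ} (hj1 : 1 ≤ j) (hj : j ≤ p - 1) :
    DD p j = (p - 2) + ∑ c ∈ Finset.Ico (p - j) (p - 1), c := by
  have h0 := Dstep hp (m := 0) (k := j) (show j < p by omega)
  rw [SS_zero hp, DD_zero] at h0
  simp only [Nat.mul_zero, Nat.zero_mul, Nat.zero_add, Nat.add_zero] at h0
  rw [h0, c2_eval hp hj1 hj]

lemma Tsum_eq {p : ℕ} (hp : 2 ≤ p) : Tsum p = ∑ c ∈ Finset.Ico 1 (p - 1), c := by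
  unfold Tsum
  rw [sum_split_top _ (show 1 ≤ p by omega)]
  have e3 : gres p (p - 1) = 0 := by simp [gres]
  rw [e3, Nat.add_zero]
  have h1 : ∑ c ∈ Finset.range (p - 1), gres p c = ∑ c ∈ Finset.range (p - 1), c := by
    apply Finset.sum_congr rfl
    intro c hc
    have := Finset.mem_range.mp hc
    unfold gres
    rw [if_neg (by omega)]
  rw [h1, Finset.range_eq_Ico,
    Finset.sum_eq_sum_Ico_succ_bot (show 0 < p - 1 by omega)]
  norm_num

lemma DD_p {p : ℕ} (hp : 2 ≤ p) : DD p p = Tsum p + (p - 2) := by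
  have h0 := Dstep hp (m := 1) (k := 0) (show 0 < p by omega)
  rw [c2_zero hp, DD_one hp] at h0
  simp only [Nat.mul_one, Nat.one_mul, Nat.add_zero] at h0
  exact h0

lemma SS_small {p : ℕ} (hp : 2 ≤ p) {j : ℕ} (hj1 : 1 ≤ j) (hj : j ≤ p - 1) :
    SS p j = p - 1 - j := by
  unfold SS
  by_cases hcase : j = p - 1
  · have e : j + 1 = p := by omega
    rw [e, DD_p hp, DD_small hp hj1 hj]
    have e2 : p - j = 1 := by omega
    rw [e2, ← Tsum_eq hp]
    omega
  · have hj2 : j + 1 ≤ p - 1 := by omega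
    rw [DD_small hp (by omega) hj2, DD_small hp hj1 hj]
    have hsplit : ∑ c ∈ Finset.Ico (p - (j + 1)) (p - 1), c
        = (p - (j + 1)) + ∑ c ∈ Finset.Ico (p - j) (p - 1), c := by
      rw [Finset.sum_eq_sum_Ico_succ_bot (show p - (j + 1) < p - 1 by omega)]
      have e : p - (j + 1) + 1 = p - j := by omega
      rw [e]
    omega

lemma SS_SS {p : ℕ} (hp : 2 ≤ p) (m : ℕ) : SS p (p - 1 - SS p m) = SS p m := by
  have hs := SS_le hp m
  have h := SS_small hp (show 1 ≤ p - 1 - SS p m by omega)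
    (show p - 1 - SS p m ≤ p - 1 by omega)
  omega

theorem main_comb {p : ℕ} (hp : 3 ≤ p) (m k : ℕ) (hk0 : 0 < k) (hk : k < p - 1) :
    SS p (p * m + k) = SS p (p * (p - 1 - SS p m) + k) := by
  have hp2 : 2 ≤ p := by omega
  rw [SSstep hp2 (show k + 1 < p by omega), SSstep hp2 (show k + 1 < p by omega),
    SS_SS hp2 m]

/-! ### Digit arithmetic -/

def valN (p : ℕ) (x : ℕ → ℕ) (N : ℕ) : ℕ := ∑ j ∈ Finset.range N, x j * p ^ j

lemma valN_succ (p : ℕ) (x : ℕ → ℕ) (N : ℕ) :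
    valN p x (N + 1) = valN p x N + x N * p ^ N := Finset.sum_range_succ _ _

lemma valN_lt {p : ℕ} (hp : 1 ≤ p) {x : ℕ → ℕ} :
    ∀ {N : ℕ}, (∀ j < N, x j < p) → valN p x N < p ^ N := by
  intro N
  induction N with
  | zero => intro _; simp [valN]
  | succ N ih =>
    intro hx
    have h1 : valN p x N < p ^ N := ih fun j hj => hx j (by omega)
    have h2 : x N * p ^ N ≤ (p - 1) * p ^ N :=
      Nat.mul_le_mul_right _ (by have := hx N (by omega); omega)
    have h3 : (p - 1) * p ^ N + p ^ N = p ^ (N + 1) := by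
      have e : (p - 1) * p ^ N + 1 * p ^ N = ((p - 1) + 1) * p ^ N := (Nat.add_mul _ _ _).symm
      have e2 : p - 1 + 1 = p := by omega
      rw [Nat.one_mul] at e
      rw [e, e2, pow_succ, Nat.mul_comm]
    rw [valN_succ]
    omega

lemma valN_digit {p : ℕ} (hp : 2 ≤ p) {x : ℕ → ℕ} :
    ∀ {N j : ℕ}, (∀ j < N, x j < p) → j < N → valN p x N / p ^ j % p = x j := by
  intro N
  induction N with
  | zero => intro j _ hj; omega
  | succ N ih =>
    intro j hx hj
    rcases Nat.lt_or_ge j N with hc | hc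
    · have hdvd : p ^ j ∣ x N * p ^ N := by
        refine Dvd.dvd.mul_left ?_ _
        exact pow_dvd_pow p (by omega)
      rw [valN_succ, Nat.add_div_of_dvd_left hdvd]
      have e : x N * p ^ N / p ^ j = (x N * p ^ (N - j - 1)) * p := by
        have e2 : p ^ N = p ^ j * (p ^ (N - j - 1) * p) := by
          rw [← pow_succ, ← pow_add]
          congr 1
          omega
        rw [e2, ← Nat.mul_assoc, Nat.mul_comm (x N) (p ^ j), Nat.mul_assoc,
          Nat.mul_div_cancel_left _ (pow_pos (by omega) j)]
        ring
      rw [e, Nat.add_mul_mod_self_right]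
      exact ih (fun j hj => hx j (by omega)) hc
    · have hjN : j = N := by omega
      subst hjN
      rw [valN_succ, Nat.add_div_of_dvd_left ⟨x j, Nat.mul_comm _ _⟩,
        Nat.mul_div_cancel _ (pow_pos (by omega) j),
        Nat.div_eq_of_lt (valN_lt (by omega) fun j hj => hx j (by omega)), Nat.zero_add]
      exact Nat.mod_eq_of_lt (hx j (by omega))

lemma mod_pow_step {p : ℕ} (hp : 1 ≤ p) (a N : ℕ) :
    a % p ^ (N + 1) = p ^ N * (a / p ^ N % p) + a % p ^ N := by
  have h1 := Nat.div_add_mod a (p ^ N)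
  have h4 := Nat.div_add_mod a (p ^ (N + 1))
  have h3 : a / p ^ N / p = a / p ^ (N + 1) := by
    rw [Nat.div_div_eq_div_mul, ← pow_succ]
  have h2' : a / p ^ N = p * (a / p ^ (N + 1)) + a / p ^ N % p := by
    rw [← h3]
    exact (Nat.div_add_mod _ p).symm
  have e0 : p ^ N * (a / p ^ N) = p ^ (N + 1) * (a / p ^ (N + 1)) + p ^ N * (a / p ^ N % p) := by
    conv_lhs => rw [h2']
    ring
  omega

lemma mod_eq_val {p : ℕ} (hp : 1 ≤ p) (a : ℕ) :
    ∀ N, a % p ^ N = valN p (fun j => a / p ^ j % p) N := by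
  intro N
  induction N with
  | zero => simp [valN, Nat.mod_one]
  | succ N ih =>
    rw [mod_pow_step hp a N, valN_succ, ih]
    ring

lemma valN_const {p : ℕ} (hp : 1 ≤ p) : ∀ N, valN p (fun _ => p - 1) N = p ^ N - 1 := by
  intro N
  induction N with
  | zero => simp [valN]
  | succ N ih =>
    rw [valN_succ, ih]
    have h3 : (p - 1) * p ^ N + p ^ N = p ^ (N + 1) := by
      have e : (p - 1) * p ^ N + 1 * p ^ N = ((p - 1) + 1) * p ^ N := (Nat.add_mul _ _ _).symm
      have e2 : p - 1 + 1 = p := by omega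
      rw [Nat.one_mul] at e
      rw [e, e2, pow_succ, Nat.mul_comm]
    have h4 : 1 ≤ p ^ N := Nat.one_le_pow _ _ (by omega)
    omega

lemma exists_digit_ne {p : ℕ} (hp : 2 ≤ p) {a i : ℕ} (ha : a < p ^ (i + 1) - 1) :
    ∃ j, j ≤ i ∧ a / p ^ j % p ≠ p - 1 := by
  by_contra h
  push_neg at h
  have he : a % p ^ (i + 1) = p ^ (i + 1) - 1 := by
    rw [mod_eq_val (by omega) a (i + 1)]
    have e : valN p (fun j => a / p ^ j % p) (i + 1) = valN p (fun _ => p - 1) (i + 1) := by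
      unfold valN
      apply Finset.sum_congr rfl
      intro j hj
      have hj' := Finset.mem_range.mp hj
      show a / p ^ j % p * p ^ j = (p - 1) * p ^ j
      rw [h j (by omega)]
    rw [e, valN_const (by omega)]
  have hlt : a % p ^ (i + 1) ≤ a := Nat.mod_le _ _
  omega

lemma fdig_eq_digit {p : ℕ} (hp : 2 ≤ p) :
    ∀ (j0 n : ℕ), (∀ j < j0, n / p ^ j % p = p - 1) → n / p ^ j0 % p ≠ p - 1 →
      fdig p n = n / p ^ j0 % p := by
  intro j0
  induction j0 with
  | zero =>
    intro n h0 h1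
    rw [pow_zero, Nat.div_one] at h1 ⊢
    exact fdig_of_ne h1
  | succ j0 ih =>
    intro n h0 h1
    have hm : n % p = p - 1 := by
      have := h0 0 (by omega)
      simpa using this
    have hdd : ∀ j, n / p / p ^ j = n / p ^ (j + 1) := by
      intro j
      rw [Nat.div_div_eq_div_mul, ← pow_succ']
    rw [fdig_of_eq hp hm, ← hdd j0]
    apply ih
    · intro j hj
      rw [hdd]
      exact h0 (j + 1) (by omega)
    · rw [hdd]
      exact h1

/-! ### Digits of `a+1` when `a` ends in a run of `p-1`s -/

lemma succ_digits {p : ℕ} (hp : 2 ≤ p) {a j0 : ℕ}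
    (h0 : ∀ j < j0, a / p ^ j % p = p - 1) (h1 : a / p ^ j0 % p ≠ p - 1) :
    (∀ j, j < j0 → (a + 1) / p ^ j % p = 0) ∧
    ((a + 1) / p ^ j0 % p = a / p ^ j0 % p + 1) ∧
    (∀ j, j0 < j → (a + 1) / p ^ j = a / p ^ j) := by
  have hppos : 0 < p := by omega
  have hrun : a % p ^ j0 = p ^ j0 - 1 := by
    rw [mod_eq_val (by omega) a j0]
    have e : valN p (fun j => a / p ^ j % p) j0 = valN p (fun _ => p - 1) j0 := by
      unfold valN
      apply Finset.sum_congr rfl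
      intro j hj
      have hj' := Finset.mem_range.mp hj
      show a / p ^ j % p * p ^ j = (p - 1) * p ^ j
      rw [h0 j hj']
    rw [e, valN_const (by omega)]
  set b := a / p ^ j0 with hb
  have hbp : b % p < p := Nat.mod_lt _ hppos
  have hbd : b % p < p - 1 := by omega
  have hpj : 1 ≤ p ^ j0 := Nat.one_le_pow _ _ hppos
  have ha1 : a + 1 = p ^ j0 * (b + 1) := by
    have hdm := Nat.div_add_mod a (p ^ j0)
    rw [← hb] at hdm
    rw [Nat.mul_add, Nat.mul_one]
    omega
  have hb1 : b + 1 = p * (b / p) + (b % p + 1) := by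
    have := Nat.div_add_mod b p
    omega
  refine ⟨?_, ?_, ?_⟩
  · intro j hj
    have e : (a + 1) / p ^ j = p ^ (j0 - j) * (b + 1) := by
      rw [ha1]
      have e2 : p ^ j0 = p ^ j * p ^ (j0 - j) := by
        rw [← pow_add]
        congr 1
        omega
      rw [e2, Nat.mul_assoc, Nat.mul_div_cancel_left _ (pow_pos hppos j)]
    rw [e]
    have hd : p ∣ p ^ (j0 - j) * (b + 1) :=
      Dvd.dvd.mul_right (dvd_pow_self p (by omega : j0 - j ≠ 0)) _
    exact Nat.dvd_iff_mod_eq_zero.mp hd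
  · rw [ha1, Nat.mul_div_cancel_left _ (pow_pos hppos j0)]
    rw [hb1, Nat.mul_add_mod]
    exact Nat.mod_eq_of_lt (by omega)
  · intro j hj
    have epow : p ^ j = p ^ j0 * p ^ (j - j0) := by
      rw [← pow_add]
      congr 1
      omega
    have e1 : a / p ^ j = b / p ^ (j - j0) := by
      rw [epow, ← Nat.div_div_eq_div_mul, ← hb]
    have e2 : (a + 1) / p ^ j = (b + 1) / p ^ (j - j0) := by
      rw [ha1, epow, ← Nat.div_div_eq_div_mul, Nat.mul_div_cancel_left _ (pow_pos hppos j0)]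
    have h4 : (b + 1) / p = b / p := by
      have hndvd : ¬ p ∣ b + 1 := by
        intro hd
        have h5 : (b + 1) % p = 0 := Nat.dvd_iff_mod_eq_zero.mp hd
        rw [hb1, Nat.mul_add_mod, Nat.mod_eq_of_lt (by omega)] at h5
        omega
      rw [Nat.succ_div, if_neg hndvd]
      omega
    have e3 : (b + 1) / p ^ (j - j0) = b / p ^ (j - j0) := by
      obtain ⟨e, he⟩ : ∃ e, j - j0 = e + 1 := ⟨j - j0 - 1, by omega⟩
      rw [he, pow_succ', ← Nat.div_div_eq_div_mul, h4, Nat.div_div_eq_div_mul, ← pow_succ']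
    rw [e1, e2, e3]

/-! ### `phiSum` equals `Fsum` on suitable cylinders -/

lemma phiSum_succ (p m : ℕ) (x : ℕ → ℕ) :
    phiSum p (m + 1) x = phi p x + phiSum p m (odo p x) := by
  unfold phiSum
  rw [Finset.sum_range_succ']
  simp only [Function.iterate_succ_apply, Function.iterate_zero_apply]
  exact Nat.add_comm _ _

lemma phiSum_eq {p : ℕ} (hp : 2 ≤ p) (i : ℕ) :
    ∀ (m a : ℕ) (x : ℕ → ℕ), (∀ j, j ≤ i → x j = a / p ^ j % p) →
      a + m < p ^ (i + 1) → phiSum p m x = Fsum p a m := by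
  intro m
  induction m with
  | zero => intro a x _ _; simp [phiSum, Fsum]
  | succ m ih =>
    intro a x hx ham
    -- a has a digit ≠ p-1 among j ≤ i
    obtain ⟨jw, hjw, hjne⟩ := exists_digit_ne hp (show a < p ^ (i + 1) - 1 by omega)
    -- least such index
    have hexg : ∃ j, a / p ^ j % p ≠ p - 1 := ⟨jw, hjne⟩
    classical
    set j0 := Nat.find hexg with hj0
    have hne : a / p ^ j0 % p ≠ p - 1 := Nat.find_spec hexg
    have hall : ∀ j < j0, a / p ^ j % p = p - 1 := by
      intro j hj
      have hj' : j < Nat.find hexg := by rw [← hj0]; exact hj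
      exact not_not.mp (Nat.find_min hexg hj')
    have hj0i : j0 ≤ i := by
      rw [hj0]
      exact le_trans (Nat.find_le hjne) hjw
    -- firstNot x = j0
    have hfn : firstNot p x = j0 := by
      apply le_antisymm
      · apply Nat.sInf_le
        show x j0 ≠ p - 1
        rw [hx j0 hj0i]
        exact hne
      · apply le_csInf ⟨j0, by show x j0 ≠ p - 1; rw [hx j0 hj0i]; exact hne⟩
        intro b hb
        by_contra hbn
        apply hb
        show x b = p - 1
        rw [hx b (by omega)]
        exact hall b (by omega)
    -- phi x = fdig a
    have hphi : phi p x = fdig p a := by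
      unfold phi
      rw [hfn, hx j0 hj0i, (fdig_eq_digit hp j0 a hall hne)]
    -- digits of odo x
    obtain ⟨hs0, hs1, hs2⟩ := succ_digits hp hall hne
    have hx' : ∀ j, j ≤ i → odo p x j = (a + 1) / p ^ j % p := by
      intro j hj
      unfold odo
      rw [hfn]
      rcases Nat.lt_trichotomy j j0 with hc | hc | hc
      · rw [if_pos hc, hs0 j hc]
      · rw [if_neg (by omega), if_pos hc, hc, hs1, hx j0 hj0i]
      · rw [if_neg (by omega), if_neg (by omega), hs2 j hc, hx j hj]
    have hFs : Fsum p a (m + 1) = fdig p a + Fsum p (a + 1) m := by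
      unfold Fsum
      rw [Finset.sum_range_succ']
      simp only [Nat.add_zero]
      rw [Nat.add_comm]
      congr 1
      apply Finset.sum_congr rfl
      intro t _
      congr 1
      ring
    rw [phiSum_succ, hphi, hFs, ih (a + 1) (odo p x) hx' (by omega)]

/-! ### Measurability -/

lemma meas_pair {α : Type*} [MeasurableSpace α] {f g : α → ℕ} (hf : Measurable f)
    (hg : Measurable g) (op : ℕ → ℕ → ℕ) : Measurable fun x => op (f x) (g x) :=
  (measurable_of_countable (fun q : ℕ × ℕ => op q.1 q.2)).comp (hf.prodMk hg)

lemma measSet_coord (j c : ℕ) : MeasurableSet {x : ℕ → ℕ | x j = c} := by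
  have h := (measurable_pi_apply (a := j) :
    Measurable fun x : ℕ → ℕ => x j) (measurableSet_singleton c)
  exact h

lemma meas_firstNot (p : ℕ) : Measurable (firstNot p) := by
  apply measurable_to_countable'
  intro n
  have heq : firstNot p ⁻¹' {n}
      = ({x : ℕ → ℕ | x n = p - 1}ᶜ ∩ ⋂ (j : ℕ) (_ : j < n), {x : ℕ → ℕ | x j = p - 1})
        ∪ ((⋂ (i : ℕ), {x : ℕ → ℕ | x i = p - 1}) ∩ {x : ℕ → ℕ | n = 0}) := by
    ext x
    simp only [Set.mem_preimage, Set.mem_singleton_iff, Set.mem_union, Set.mem_inter_iff,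
      Set.mem_compl_iff, Set.mem_iInter, Set.mem_setOf_eq]
    constructor
    · intro h
      by_cases hne : ∃ i, x i ≠ p - 1
      · left
        have h1 : x (firstNot p x) ≠ p - 1 := Nat.sInf_mem hne
        rw [h] at h1
        refine ⟨h1, fun j hj => ?_⟩
        by_contra hc
        have h2 : firstNot p x ≤ j := Nat.sInf_le hc
        omega
      · right
        push_neg at hne
        refine ⟨hne, ?_⟩
        have hempty : {i | x i ≠ p - 1} = ∅ := by
          ext i
          simp [hne i]
        have h0 : firstNot p x = 0 := by
          unfold firstNot
          rw [hempty]
          exact Nat.sInf_empty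
        omega
    · rintro (⟨h1, h2⟩ | ⟨h1, h2⟩)
      · apply le_antisymm
        · exact Nat.sInf_le h1
        · apply le_csInf ⟨n, h1⟩
          intro b hb
          by_contra hbn
          exact hb (h2 b (by omega))
      · have hempty : {i | x i ≠ p - 1} = ∅ := by
          ext i
          simp [h1 i]
        show firstNot p x = n
        unfold firstNot
        rw [hempty, Nat.sInf_empty]
        omega
  rw [heq]
  apply MeasurableSet.union
  · exact ((measSet_coord n (p - 1)).compl).inter
      (MeasurableSet.iInter fun j => MeasurableSet.iInter fun _ => measSet_coord j (p - 1))
  · refine (MeasurableSet.iInter fun i => measSet_coord i (p - 1)).inter ?_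
    by_cases hn : n = 0
    · have e : {x : ℕ → ℕ | n = 0} = Set.univ := by
        ext x
        simp [hn]
      rw [e]
      exact MeasurableSet.univ
    · have e : {x : ℕ → ℕ | n = 0} = ∅ := by
        ext x
        simp [hn]
      rw [e]
      exact MeasurableSet.empty

lemma meas_phi (p : ℕ) : Measurable (phi p) := by
  apply measurable_to_countable'
  intro v
  have heq : phi p ⁻¹' {v} = ⋃ (n : ℕ), (firstNot p ⁻¹' {n} ∩ {x : ℕ → ℕ | x n = v}) := by
    ext x
    simp only [Set.mem_preimage, Set.mem_singleton_iff, Set.mem_iUnion, Set.mem_inter_iff,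
      Set.mem_setOf_eq]
    constructor
    · intro h
      exact ⟨firstNot p x, rfl, h⟩
    · rintro ⟨n, h1, h2⟩
      unfold phi
      rw [h1]
      exact h2
  rw [heq]
  exact MeasurableSet.iUnion fun n =>
    ((meas_firstNot p) (measurableSet_singleton n)).inter (measSet_coord n v)

lemma meas_odo (p : ℕ) : Measurable (odo p) := by
  apply measurable_pi_lambda
  intro i
  exact meas_pair (meas_firstNot p) (measurable_pi_apply i)
    (fun n xi => if i < n then 0 else if i = n then xi + 1 else xi)

lemma meas_phiSum (p m : ℕ) : Measurable (phiSum p m) := by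
  induction m with
  | zero =>
    have h : phiSum p 0 = fun _ => 0 := by
      funext x
      simp [phiSum]
    rw [h]
    exact measurable_const
  | succ m ih =>
    have h : phiSum p (m + 1) = fun x => phi p x + phiSum p m (odo p x) := by
      funext x
      exact phiSum_succ p m x
    rw [h]
    exact meas_pair (meas_phi p) (ih.comp (meas_odo p)) (· + ·)

lemma measSet_phiSum (p m j : ℕ) : MeasurableSet {x : ℕ → ℕ | phiSum p m x = j} :=
  meas_phiSum p m (measurableSet_singleton j)

lemma meas_digitsOf (p : ℕ) : Measurable (digitsOf p) := by
  apply measurable_pi_lambda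
  intro i
  have h1 : Measurable fun u : ℝ => ⌊u * (p : ℝ) ^ (i + 1)⌋ :=
    Measurable.floor (measurable_id.mul_const _)
  exact (measurable_of_countable (fun z : ℤ => z.toNat % p)).comp h1

lemma lam_eq (p m j : ℕ) :
    lam p {x | phiSum p m x = j}
      = volume (digitsOf p ⁻¹' {x | phiSum p m x = j} ∩ Set.Ico (0 : ℝ) 1) := by
  unfold lam
  rw [Measure.map_apply (meas_digitsOf p) (measSet_phiSum p m j),
    Measure.restrict_apply (meas_digitsOf p (measSet_phiSum p m j))]

/-! ### Digits of real numbers -/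

lemma digitsOf_eq {p : ℕ} (hp : 2 ≤ p) {u : ℝ} (hu : 0 ≤ u) {i N : ℕ} (hiN : i < N) :
    digitsOf p u i = ⌊u * (p : ℝ) ^ N⌋₊ / p ^ (N - 1 - i) % p := by
  unfold digitsOf
  rw [Int.floor_toNat]
  congr 1
  rw [← Nat.floor_div_natCast (u * (p : ℝ) ^ N) (p ^ (N - 1 - i))]
  congr 1
  have hc : ((p ^ (N - 1 - i) : ℕ) : ℝ) ≠ 0 := by
    have h2 : (0 : ℕ) < p ^ (N - 1 - i) := pow_pos (by omega) _
    exact_mod_cast h2.ne'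
  rw [eq_div_iff hc]
  push_cast
  rw [mul_assoc, ← pow_add]
  congr 2
  omega

lemma floor_on_interval {p : ℕ} (hp : 2 ≤ p) {c N : ℕ} {u : ℝ}
    (h1 : (c : ℝ) / (p : ℝ) ^ N ≤ u) (h2 : u < ((c : ℝ) + 1) / (p : ℝ) ^ N) :
    ⌊u * (p : ℝ) ^ N⌋₊ = c := by
  have hpow : (0 : ℝ) < (p : ℝ) ^ N := by positivity
  have hu0 : 0 ≤ u := le_trans (by positivity) h1
  rw [Nat.floor_eq_iff (mul_nonneg hu0 hpow.le)]
  constructor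
  · rw [div_le_iff₀ hpow] at h1
    exact h1
  · rw [lt_div_iff₀ hpow] at h2
    exact h2

lemma digitsOf_lt {p : ℕ} (hp : 2 ≤ p) (u : ℝ) (j : ℕ) : digitsOf p u j < p := by
  unfold digitsOf
  exact Nat.mod_lt _ (by omega)

lemma exists_good_digit {p : ℕ} (hp : 2 ≤ p) {u : ℝ} (hu0 : 0 ≤ u) (hu1 : u < 1) (L : ℕ) :
    ∃ i, L ≤ i ∧ digitsOf p u i ≠ p - 1 := by
  by_contra hcon
  push_neg at hcon
  have hfl : ∀ i : ℕ, (0 : ℝ) ≤ u * (p : ℝ) ^ i := fun i => mul_nonneg hu0 (by positivity)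
  have hstep : ∀ i, L ≤ i → ⌊u * (p : ℝ) ^ (i + 1)⌋₊ + 1 = p * (⌊u * (p : ℝ) ^ i⌋₊ + 1) := by
    intro i hi
    have hdigit : ⌊u * (p : ℝ) ^ (i + 1)⌋₊ % p = p - 1 := by
      have h := hcon i hi
      unfold digitsOf at h
      rwa [Int.floor_toNat] at h
    have hdiv : ⌊u * (p : ℝ) ^ (i + 1)⌋₊ / p = ⌊u * (p : ℝ) ^ i⌋₊ := by
      rw [← Nat.floor_div_natCast]
      congr 1
      have hpne : ((p : ℕ) : ℝ) ≠ 0 := by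
        exact_mod_cast (show (0:ℕ) < p by omega).ne'
      rw [div_eq_iff hpne, pow_succ]
      ring
    have hdm := Nat.div_add_mod (⌊u * (p : ℝ) ^ (i + 1)⌋₊) p
    rw [hdiv] at hdm
    rw [Nat.mul_add, Nat.mul_one]
    omega
  have key : ∀ t, ⌊u * (p : ℝ) ^ (L + t)⌋₊ + 1 = p ^ t * (⌊u * (p : ℝ) ^ L⌋₊ + 1) := by
    intro t
    induction t with
    | zero => simp
    | succ t ih =>
      have e : L + (t + 1) = (L + t) + 1 := by omega
      rw [e, hstep (L + t) (by omega), ih, ← Nat.mul_assoc, ← pow_succ']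
  set B := ⌊u * (p : ℝ) ^ L⌋₊ with hB
  have hlt : u * (p : ℝ) ^ L < (B : ℝ) + 1 := Nat.lt_floor_add_one _
  have hge : ∀ t, ((p ^ t * (B + 1) : ℕ) : ℝ) - 1 ≤ u * (p : ℝ) ^ (L + t) := by
    intro t
    have h1 : (⌊u * (p : ℝ) ^ (L + t)⌋₊ : ℝ) ≤ u * (p : ℝ) ^ (L + t) := Nat.floor_le (hfl _)
    have h2 := key t
    have h3 : (⌊u * (p : ℝ) ^ (L + t)⌋₊ : ℕ) = p ^ t * (B + 1) - 1 := by omega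
    have h4 : 1 ≤ p ^ t * (B + 1) := Nat.mul_pos (pow_pos (by omega) t) (by omega)
    rw [h3, Nat.cast_sub h4] at h1
    exact_mod_cast h1
  set ε := ((B : ℝ) + 1) - u * (p : ℝ) ^ L with hε
  have hε0 : 0 < ε := by
    rw [hε]
    linarith
  obtain ⟨t, ht⟩ := pow_unbounded_of_one_lt (1 / ε) (show (1 : ℝ) < p by exact_mod_cast hp)
  have hcontr := hge t
  have he1 : u * (p : ℝ) ^ (L + t) = (u * (p : ℝ) ^ L) * (p : ℝ) ^ t := by
    rw [pow_add]
    ring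
  have he2 : ((p ^ t * (B + 1) : ℕ) : ℝ) = (p : ℝ) ^ t * ((B : ℝ) + 1) := by
    push_cast
    ring
  have hu : u * (p : ℝ) ^ L = ((B : ℝ) + 1) - ε := by
    rw [hε]
    ring
  rw [he1, he2, hu] at hcontr
  have hεt : ε * (p : ℝ) ^ t ≤ 1 := by nlinarith
  have hgt : 1 < ε * (p : ℝ) ^ t := by
    have := (div_lt_iff₀ hε0).mp ht
    linarith [mul_comm ε ((p : ℝ) ^ t)]
  linarith

/-! ### `pim` is nonzero exactly on values of `Fsum` -/

lemma pim_pos {p : ℕ} (hp : 2 ≤ p) (a m : ℕ) : pim p m (Fsum p a m) ≠ 0 := by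
  set N := a + m + 1 with hN
  have hpN : a + m + 1 ≤ p ^ N := by
    calc a + m + 1 ≤ 2 ^ N := by
          have := Nat.lt_two_pow_self (n := N)
          omega
      _ ≤ p ^ N := Nat.pow_le_pow_left hp N
  set c := valN p (fun s => a / p ^ (N - 1 - s) % p) N with hc
  have hcd : ∀ s, s < N → a / p ^ (N - 1 - s) % p < p := fun s _ => Nat.mod_lt _ (by omega)
  have hclt : c < p ^ N := valN_lt (by omega) hcd
  have hpowR : (0 : ℝ) < (p : ℝ) ^ N := by positivity
  have hsub : Set.Ico ((c : ℝ) / (p : ℝ) ^ N) (((c : ℝ) + 1) / (p : ℝ) ^ N)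
      ⊆ digitsOf p ⁻¹' {x | phiSum p m x = Fsum p a m} ∩ Set.Ico (0 : ℝ) 1 := by
    rintro u ⟨hu1, hu2⟩
    have hu0 : 0 ≤ u := le_trans (by positivity) hu1
    have hu1' : u < 1 := by
      apply lt_of_lt_of_le hu2
      rw [div_le_one hpowR]
      have h5 : ((c + 1 : ℕ) : ℝ) ≤ ((p ^ N : ℕ) : ℝ) := by
        exact_mod_cast Nat.succ_le_of_lt hclt
      push_cast at h5
      linarith
    have hfl : ⌊u * (p : ℝ) ^ N⌋₊ = c := floor_on_interval hp hu1 hu2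
    have hdig : ∀ j, j < N → digitsOf p u j = a / p ^ j % p := by
      intro j hj
      rw [digitsOf_eq hp hu0 hj, hfl]
      have h2 := valN_digit hp (x := fun s => a / p ^ (N - 1 - s) % p) hcd
        (show N - 1 - j < N by omega)
      rw [← hc] at h2
      rw [h2]
      show a / p ^ (N - 1 - (N - 1 - j)) % p = a / p ^ j % p
      have e : N - 1 - (N - 1 - j) = j := by omega
      rw [e]
    constructor
    · show phiSum p m (digitsOf p u) = Fsum p a m
      apply phiSum_eq hp (N - 1) m a (digitsOf p u) (fun j hj => hdig j (by omega))
      have e : N - 1 + 1 = N := by omega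
      rw [e]
      omega
    · exact ⟨hu0, hu1'⟩
  unfold pim
  rw [lam_eq]
  intro h0
  have hz : volume (Set.Ico ((c : ℝ) / (p : ℝ) ^ N) (((c : ℝ) + 1) / (p : ℝ) ^ N)) = 0 :=
    le_antisymm (h0 ▸ measure_mono hsub) zero_le
  rw [Real.volume_Ico] at hz
  have hgap : ((c : ℝ) + 1) / (p : ℝ) ^ N - (c : ℝ) / (p : ℝ) ^ N = 1 / (p : ℝ) ^ N := by
    field_simp
    ring
  rw [hgap] at hz
  have hpos : (0 : ℝ) < 1 / (p : ℝ) ^ N := by positivity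
  rw [ENNReal.ofReal_eq_zero] at hz
  linarith

lemma phiSum_exists {p : ℕ} (hp : 2 ≤ p) (m : ℕ) {u : ℝ} (hu0 : 0 ≤ u) (hu1 : u < 1) :
    ∃ a, phiSum p m (digitsOf p u) = Fsum p a m := by
  obtain ⟨i, hiL, hdig⟩ := exists_good_digit hp hu0 hu1 (m + 1)
  set N := i + 1 with hN
  have hdu : ∀ j, digitsOf p u j < p := fun j => digitsOf_lt hp u j
  set a := valN p (digitsOf p u) N with ha
  refine ⟨a, ?_⟩
  have hdigs : ∀ j, j < N → a / p ^ j % p = digitsOf p u j := fun j hj =>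
    valN_digit hp (fun j _ => hdu j) hj
  have hvi : valN p (digitsOf p u) i < p ^ i := valN_lt (by omega) (fun j _ => hdu j)
  have hxi : digitsOf p u i ≤ p - 2 := by
    have h6 := hdu i
    omega
  have hmi : m + 1 ≤ p ^ i := by
    calc m + 1 ≤ 2 ^ (m + 1) := le_of_lt (Nat.lt_two_pow_self (n := m + 1))
      _ ≤ p ^ (m + 1) := Nat.pow_le_pow_left hp _
      _ ≤ p ^ i := Nat.pow_le_pow_right (by omega) hiL
  have ham : a + m < p ^ N := by
    have hsp : a = valN p (digitsOf p u) i + digitsOf p u i * p ^ i := valN_succ p _ i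
    have h2 : digitsOf p u i * p ^ i ≤ (p - 2) * p ^ i := Nat.mul_le_mul_right _ hxi
    have h3 : (p - 2) * p ^ i + 2 * p ^ i = p * p ^ i := by
      rw [← Nat.add_mul]
      congr 1
      omega
    have h4 : p * p ^ i = p ^ N := by
      rw [hN, pow_succ, Nat.mul_comm]
    omega
  exact phiSum_eq hp i m a (digitsOf p u) (fun j hj => (hdigs j (by omega)).symm) ham

lemma pim_ne_iff {p : ℕ} (hp : 2 ≤ p) (m j : ℕ) :
    pim p m j ≠ 0 ↔ ∃ a, Fsum p a m = j := by
  constructor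
  · intro h
    by_contra hno
    push_neg at hno
    apply h
    unfold pim
    rw [lam_eq]
    have hempty : digitsOf p ⁻¹' {x | phiSum p m x = j} ∩ Set.Ico (0 : ℝ) 1 = ∅ := by
      apply Set.eq_empty_iff_forall_notMem.mpr
      rintro u ⟨hpre, hu0, hu1⟩
      obtain ⟨a, haeq⟩ := phiSum_exists hp m hu0 hu1
      apply hno a
      rw [← haeq]
      exact hpre
    rw [hempty]
    exact measure_empty
  · rintro ⟨a, rfl⟩
    exact pim_pos hp a m

lemma D_eq_DD {p : ℕ} (hp : 2 ≤ p) (m : ℕ) : D p m = DD p m := by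
  unfold D DD
  congr 1
  ext j
  simp only [Set.mem_setOf_eq, Set.mem_range]
  rw [pim_ne_iff hp m j]

lemma Sseq_eq_SS {p : ℕ} (hp : 2 ≤ p) (n : ℕ) : Sseq p n = SS p n := by
  unfold Sseq SS
  rw [D_eq_DD hp, D_eq_DD hp]

/-- with `S_m = D_{m+1} - D_m`, for every `m ≥ p` and `0 < k < p-1`,
`S_{pm+k} = S_{p(p-1-S_m)+k}`. -/
theorem statement_14 (p : ℕ) (hp : 3 ≤ p) (m k : ℕ) (hm : p ≤ m)
    (hk0 : 0 < k) (hk : k < p - 1) :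
    Sseq p (p * m + k) = Sseq p (p * (p - 1 - Sseq p m) + k) := by
  have hp2 : 2 ≤ p := by omega
  simp only [Sseq_eq_SS hp2]
  exact main_comb hp m k hk0 hk

end Chacon
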